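/- (Flow Decomposition) Let N = (V, A, c) be a network, y, z ∈ V distinct and f a flow from y to z in N of value m ∈ ℕ₀. Then there exist a sequence γ = (γ_1, …, γ_m) of m paths from y to z in N, k ∈ ℕ₀ and a sequence w = (w_1, …, w_k) of k cycles in N such that f = Σ_{j∈[m]} χ_{γ_j} + Σ_{j∈[k]} χ_{w_j}. Moreover, for every such decomposition (γ, w) of f, the sequence γ is a sequence of m arc-disjoint paths from y to z in N. -/

import Mathlib

/-!
Networks on the complete digraph: capacities `c : V → V → ℕ` with no loops
(arcs are ordered pairs of distinct vertices; loops are given capacity 0).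
-/

structure Network (V : Type*) where
  c : V → V → ℕ
  no_loop : ∀ v, c v v = 0

namespace NetFlow

variable {V : Type*} [Fintype V] [DecidableEq V]

/-- `f` is a flow from `y` to `z` in `N`. -/
def IsFlow (N : Network V) (y z : V) (f : V → V → ℕ) : Prop :=
  (∀ u v, f u v ≤ N.c u v) ∧
  (∀ x, x ≠ y → x ≠ z → ∑ u, f u x = ∑ u, f x u)

/-- The value of a flow from `y`. -/
def flowValue (f : V → V → ℕ) (y : V) : ℤ :=
  (∑ u, (f y u : ℤ)) - ∑ u, (f u y : ℤ)

/-- The maximum flow value `φ^N_{yz}`. -/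
noncomputable def maxFlowValue (N : Network V) (y z : V) : ℕ :=
  sSup {m : ℕ | ∃ f, IsFlow N y z f ∧ flowValue f y = (m : ℤ)}

/-- `f` is a maximum flow from `y` to `z` in `N`. -/
def IsMaxFlow (N : Network V) (y z : V) (f : V → V → ℕ) : Prop :=
  IsFlow N y z f ∧ flowValue f y = (maxFlowValue N y z : ℤ)

/-- The network `N_X`: capacities of arcs incident to `X` are set to zero. -/
def removeVerts (N : Network V) (X : Finset V) : Network V where
  c u v := if u ∈ X ∨ v ∈ X then 0 else N.c u v
  no_loop v := by simp [N.no_loop v]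

/-- `φ^N_{yz}(X) = φ^N_{yz} - φ^{N_X}_{yz}`. -/
noncomputable def phiDrop (N : Network V) (y z : V) (X : Finset V) : ℤ :=
  (maxFlowValue N y z : ℤ) - (maxFlowValue (removeVerts N X) y z : ℤ)

/-- The (consecutive) arcs of a list of vertices. -/
def pathArcs (p : List V) : List (V × V) := p.zip p.tail

/-- `p` is a path from `y` to `z` in `N`: at least two distinct vertices, starting at `y`,
ending at `z`, with all consecutive arcs of positive capacity. -/
def IsPath (N : Network V) (y z : V) (p : List V) : Prop :=
  2 ≤ p.length ∧ p.Nodup ∧ p.head? = some y ∧ p.getLast? = some z ∧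
    p.Chain' fun u v => 1 ≤ N.c u v

/-- `p` is a cycle in `N`. -/
def IsCycle (N : Network V) (p : List V) : Prop :=
  3 ≤ p.length ∧ p.dropLast.Nodup ∧ p.head? = p.getLast? ∧
    p.Chain' fun u v => 1 ≤ N.c u v

/-- A sequence of arc-disjoint paths from `y` to `z` in `N`: each component is a path, and
each arc `a` is used by at most `c a` components. -/
def IsPathSeq (N : Network V) (y z : V) (γ : List (List V)) : Prop :=
  (∀ p ∈ γ, IsPath N y z p) ∧
  ∀ u v : V, γ.countP (fun p => decide ((u, v) ∈ pathArcs p)) ≤ N.c u v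

/-- `λ^N_{yz}`: the maximum length of a sequence of arc-disjoint paths from `y` to `z`. -/
noncomputable def maxSeqLen (N : Network V) (y z : V) : ℕ :=
  sSup {m : ℕ | ∃ γ : List (List V), IsPathSeq N y z γ ∧ γ.length = m}

/-- `M^N_{yz}`: the sequences of arc-disjoint paths from `y` to `z` of maximum length. -/
def MaxSeqs (N : Network V) (y z : V) : Set (List (List V)) :=
  {γ | IsPathSeq N y z γ ∧ γ.length = maxSeqLen N y z}

/-- `l_X(γ)`: the number of components of `γ` having a vertex in `X`. -/
def lX (X : Finset V) (γ : List (List V)) : ℕ :=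
  γ.countP fun p => p.any fun x => decide (x ∈ X)

/-- `λ^N_{yz}(X)`: the minimum of `l_X` over maximum-length sequences of arc-disjoint paths. -/
noncomputable def lambdaX (N : Network V) (y z : V) (X : Finset V) : ℕ :=
  sInf {n : ℕ | ∃ γ ∈ MaxSeqs N y z, lX X γ = n}

/-- The flow through a vertex: `f(x) = Σ_{a exiting x} f(a)` if `x ∉ {y,z}`, `v(f)` otherwise. -/
def vertexFlow (f : V → V → ℕ) (y z x : V) : ℤ :=
  if x = y ∨ x = z then flowValue f y else ∑ u, (f x u : ℤ)

/-- `δ^N_{yz}(X)`: the minimum of `f(X) = Σ_{x∈X} f(x)` over maximum flows `f`. -/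
noncomputable def deltaX (N : Network V) (y z : V) (X : Finset V) : ℕ :=
  sInf {n : ℕ | ∃ f, IsMaxFlow N y z f ∧ (∑ x ∈ X, vertexFlow f y z x) = (n : ℤ)}

/-- The flow `f_γ` associated with a sequence of arc-disjoint paths. -/
def seqFlow (γ : List (List V)) (u v : V) : ℕ :=
  γ.countP fun p => decide ((u, v) ∈ pathArcs p)

/-- The path (or cycle) function `χ_p` of a path or cycle `p`. -/
def chi (p : List V) (u v : V) : ℕ := (pathArcs p).count (u, v)

/-- `(γ, w)` is a decomposition of the flow `f`: `γ` is a sequence of `v(f)` paths from `y`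
to `z`, `w` a sequence of cycles, and `f = Σ_j χ_{γ_j} + Σ_j χ_{w_j}`. -/
def IsDecomposition (N : Network V) (y z : V) (f : V → V → ℕ)
    (γ w : List (List V)) : Prop :=
  (∀ p ∈ γ, IsPath N y z p) ∧ (∀ q ∈ w, IsCycle N q) ∧
  (γ.length : ℤ) = flowValue f y ∧
  ∀ u v : V, f u v = (γ.map fun p => chi p u v).sum + (w.map fun q => chi q u v).sum

/-- The forward arcs of a generalized path given by vertices `p` and directions `d`. -/
def forwardArcs (p : List V) (d : List Bool) : List (V × V) :=
  ((p.zip p.tail).zip d).filterMap fun e => if e.2 then some e.1 else none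

/-- The backward arcs of a generalized path given by vertices `p` and directions `d`. -/
def backwardArcs (p : List V) (d : List Bool) : List (V × V) :=
  ((p.zip p.tail).zip d).filterMap fun e => if e.2 then none else some (e.1.2, e.1.1)

/-- `(p, d)` is a generalized path from `y` to `z`: distinct vertices `x_1 = y, …, x_m = z`
(`m ≥ 2`), the `i`-th arc being `(x_i, x_{i+1})` (forward, `d_i = true`) or `(x_{i+1}, x_i)`
(backward, `d_i = false`). -/
def IsGenPath (y z : V) (p : List V) (d : List Bool) : Prop :=
  2 ≤ p.length ∧ p.Nodup ∧ p.head? = some y ∧ p.getLast? = some z ∧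
    d.length + 1 = p.length

/-- `(p, d)` is an augmenting path for `f` from `y` to `z` in `N`. -/
def IsAugPath (N : Network V) (y z : V) (f : V → V → ℕ)
    (p : List V) (d : List Bool) : Prop :=
  IsGenPath y z p d ∧
  (∀ a ∈ forwardArcs p d, f a.1 a.2 < N.c a.1 a.2) ∧
  (∀ a ∈ backwardArcs p d, 1 ≤ f a.1 a.2)

/-- `χ_σ` for a generalized path `σ = (p, d)`: `+1` on forward arcs, `-1` on backward arcs. -/
def chiGen (p : List V) (d : List Bool) (u v : V) : ℤ :=
  ((forwardArcs p d).count (u, v) : ℤ) - ((backwardArcs p d).count (u, v) : ℤ)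

/-- The full flow vitality group centrality measure `φ^N(X)`. -/
noncomputable def phiGC (N : Network V) (X : Finset V) : ℝ :=
  ∑ a ∈ Finset.univ.filter (fun a : V × V => a.1 ≠ a.2 ∧ 0 < maxFlowValue N a.1 a.2),
    (phiDrop N a.1 a.2 X : ℝ) / (maxFlowValue N a.1 a.2 : ℝ)

/-- The full flow betweenness group centrality measure `λ^N(X)`. -/
noncomputable def lambdaGC (N : Network V) (X : Finset V) : ℝ :=
  ∑ a ∈ Finset.univ.filter (fun a : V × V => a.1 ≠ a.2 ∧ 0 < maxFlowValue N a.1 a.2),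
    (lambdaX N a.1 a.2 X : ℝ) / (maxFlowValue N a.1 a.2 : ℝ)

end NetFlow


section FlowDecompAux
set_option linter.unusedSectionVars false
namespace NetFlow
variable {V : Type*} [Fintype V] [DecidableEq V]

lemma pathArcs_eq (p : List V) : pathArcs p = p.dropLast.zip p.tail := by
  induction p with
  | nil => rfl
  | cons a t ih =>
    cases t with
    | nil => rfl
    | cons b s =>
      simp only [pathArcs, List.zip_cons_cons, List.tail_cons, List.dropLast_cons₂] at *
      rw [ih]

lemma map_fst_pathArcs (p : List V) : (pathArcs p).map Prod.fst = p.dropLast := by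
  rw [pathArcs_eq]
  apply List.map_fst_zip
  cases p with
  | nil => simp
  | cons a t => simp [List.length_dropLast]

lemma map_snd_pathArcs (p : List V) : (pathArcs p).map Prod.snd = p.tail := by
  apply List.map_snd_zip
  cases p <;> simp

lemma sum_count_fst (l : List (V × V)) (x : V) :
    ∑ u, l.count (x, u) = (l.map Prod.fst).count x := by
  induction l with
  | nil => simp
  | cons a t ih =>
    simp only [List.count_cons, List.map_cons]
    rw [Finset.sum_add_distrib, ih]
    congr 1
    rcases a with ⟨a1, a2⟩
    simp only [beq_iff_eq, Prod.mk.injEq]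
    by_cases h : a1 = x <;> simp [h, eq_comm]

lemma sum_count_snd (l : List (V × V)) (x : V) :
    ∑ u, l.count (u, x) = (l.map Prod.snd).count x := by
  induction l with
  | nil => simp
  | cons a t ih =>
    simp only [List.count_cons, List.map_cons]
    rw [Finset.sum_add_distrib, ih]
    congr 1
    rcases a with ⟨a1, a2⟩
    simp only [beq_iff_eq, Prod.mk.injEq]
    by_cases h : a2 = x <;> simp [h, eq_comm, and_comm]

lemma sum_chi_out (p : List V) (x : V) : ∑ u, chi p x u = p.dropLast.count x := by
  simp only [chi]
  rw [sum_count_fst, map_fst_pathArcs]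

lemma sum_chi_in (p : List V) (x : V) : ∑ u, chi p u x = p.tail.count x := by
  simp only [chi]
  rw [sum_count_snd, map_snd_pathArcs]

lemma chi_le_one {p : List V} (h : p.dropLast.Nodup) (u v : V) : chi p u v ≤ 1 := by
  have hnd : (pathArcs p).Nodup := by
    have := map_fst_pathArcs p
    exact (this ▸ h).of_map Prod.fst
  have key : ∀ (l : List (V × V)) (a : V × V),
      @List.count _ instBEqProd a l = @List.count _ instBEqOfDecidableEq a l := by
    intro l a
    rw [@List.count_eq_countP, @List.count_eq_countP]
    apply List.countP_congr
    intro x _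
    have h1 : (@BEq.beq _ instBEqProd x a = true) ↔ x = a := beq_iff_eq
    have h2 : (@BEq.beq _ instBEqOfDecidableEq x a = true) ↔ x = a := by
      simp [instBEqOfDecidableEq]
    rw [h1, h2]
  show @List.count _ instBEqProd (u, v) (pathArcs p) ≤ 1
  rw [key]
  exact (@List.nodup_iff_count_le_one _ instBEqOfDecidableEq _ _).1 hnd (u, v)

lemma one_le_f_of_mem_pathArcs {f : V → V → ℕ} {p : List V}
    (hc : p.Chain' fun u v => 1 ≤ f u v) {u v : V} (h : (u, v) ∈ pathArcs p) :
    1 ≤ f u v := by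
  induction p with
  | nil => simp [pathArcs] at h
  | cons a t ih =>
    cases t with
    | nil => simp [pathArcs] at h
    | cons b s =>
      rw [show pathArcs (a :: b :: s) = (a, b) :: pathArcs (b :: s) from rfl] at h
      rcases List.mem_cons.1 h with h | h
      · cases h; exact (List.isChain_cons_cons.1 hc).1
      · exact ih (List.isChain_cons_cons.1 hc).2 h

lemma chi_le_f {f : V → V → ℕ} {p : List V} (hnd : p.dropLast.Nodup)
    (hc : p.Chain' fun u v => 1 ≤ f u v) (u v : V) : chi p u v ≤ f u v := by
  by_cases h : (u, v) ∈ pathArcs p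
  · exact le_trans (chi_le_one hnd u v) (one_le_f_of_mem_pathArcs hc h)
  · simp [chi, List.count_eq_zero_of_not_mem h]

lemma count_tail {p : List V} (hp : p ≠ []) (x : V) :
    p.count x = p.tail.count x + (if p.head hp = x then 1 else 0) := by
  have h2 := congrArg (List.count x) (List.cons_head_tail hp)
  rw [← h2, List.count_cons]
  by_cases h : p.head hp = x <;> simp [h, beq_iff_eq]

lemma count_dropLast {p : List V} (hp : p ≠ []) (x : V) :
    p.count x = p.dropLast.count x + (if p.getLast hp = x then 1 else 0) := by
  have h2 := congrArg (List.count x) (List.dropLast_append_getLast hp)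
  rw [← h2, List.count_append]
  by_cases h : p.getLast hp = x <;> simp [h, List.count_singleton', beq_iff_eq]

lemma cycle_count {q : List V} (hq : q ≠ []) (hhl : q.head? = q.getLast?) (x : V) :
    q.tail.count x = q.dropLast.count x := by
  have h1 := count_tail hq x
  have h2 := count_dropLast hq x
  have hhl' : q.head hq = q.getLast hq := by
    have e1 : q.head? = some (q.head hq) := List.head?_eq_head hq
    have e2 : q.getLast? = some (q.getLast hq) := List.getLast?_eq_getLast hq
    rw [e1, e2] at hhl
    exact Option.some.inj hhl
  rw [hhl'] at h1
  by_cases h : q.getLast hq = x <;> simp [h] at h1 h2 <;> omega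

lemma exists_pos_of_sum_pos {g : V → ℕ} (h : 1 ≤ ∑ u, g u) : ∃ v, 1 ≤ g v := by
  by_contra hc
  push_neg at hc
  simp only [Nat.lt_one_iff] at hc
  simp [hc] at h

lemma walk_rec (f : V → V → ℕ) (hloop : ∀ v, f v v = 0) (y z : V)
    (hstep : ∀ x, x ≠ z → ∑ u, f u x ≤ ∑ u, f x u) :
    ∀ (n : ℕ) (p : List V) (hp : p ≠ []), p.Nodup →
      p.Chain' (fun u v => 1 ≤ f u v) → p.head? = some y →
      Fintype.card V < p.length + n →
      (1 ≤ ∑ u, f (p.getLast hp) u) →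
      (∃ q : List V, 3 ≤ q.length ∧ q.dropLast.Nodup ∧ q.head? = q.getLast? ∧
          q.Chain' (fun u v => 1 ≤ f u v)) ∨
      (∃ p' : List V, p'.Nodup ∧ p'.Chain' (fun u v => 1 ≤ f u v) ∧
          p'.head? = some y ∧ p'.getLast? = some z ∧ 2 ≤ p'.length) := by
  intro n
  induction n with
  | zero =>
    intro p hp hnd _ _ hcard _
    exact absurd (hnd.length_le_card) (by omega)
  | succ n ih =>
    intro p hp hnd hch hhd hcard hout
    obtain ⟨v, hv⟩ := exists_pos_of_sum_pos hout
    set x := p.getLast hp with hx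
    have hvx : v ≠ x := by
      rintro rfl
      simp [hloop] at hv
    have hlast? : p.getLast? = some x := List.getLast?_eq_getLast hp
    by_cases hvp : v ∈ p
    · -- found a cycle
      left
      obtain ⟨s, t, hst⟩ := List.append_of_mem hvp
      have ht : t ≠ [] := by
        rintro rfl
        apply hvx
        have : p.getLast hp = v := by
          subst hst
          simp [List.getLast_append]
        exact this.symm
      have hsuffix : (v :: t) <:+ p := ⟨s, hst.symm⟩
      have hlast_t : (v :: t).getLast (by simp) = x := by
        subst hst
        rw [hx]
        simp [List.getLast_append]
      refine ⟨(v :: t) ++ [v], ?_, ?_, ?_, ?_⟩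
      · have : 1 ≤ t.length := List.length_pos_iff.2 ht
        simp only [List.length_append, List.length_cons, List.length_singleton]
        omega
      · rw [List.dropLast_concat]
        exact ((hst ▸ hnd).sublist (List.sublist_append_right s _))
      · show ((v :: t) ++ [v]).head? = ((v :: t) ++ [v]).getLast?
        rw [List.getLast?_concat]
        simp
      · apply List.isChain_append.2
        refine ⟨List.IsChain.suffix hch hsuffix, List.isChain_singleton v, ?_⟩
        intro a ha b hb
        simp only [List.head?_cons, Option.mem_def, Option.some.injEq] at hb
        rw [List.getLast?_eq_getLast (l := v :: t) (by simp), hlast_t] at ha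
        simp only [Option.mem_def, Option.some.injEq] at ha
        subst ha; subst hb
        exact hv
    · by_cases hvz : v = z
      · -- found a path to z
        right
        subst hvz
        refine ⟨p ++ [v], ?_, ?_, ?_, ?_, ?_⟩
        · exact hnd.append (List.nodup_singleton v) (by simpa using hvp)
        · apply List.isChain_append.2
          refine ⟨hch, List.isChain_singleton v, ?_⟩
          intro a ha b hb
          simp only [List.head?_cons, Option.mem_def, Option.some.injEq] at hb
          rw [hlast?] at ha
          simp only [Option.mem_def, Option.some.injEq] at ha
          subst ha; subst hb
          exact hv
        · rw [List.head?_append_of_ne_nil _ hp]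
          exact hhd
        · simp
        · have : 1 ≤ p.length := List.length_pos_iff.2 hp
          simp only [List.length_append, List.length_singleton]
          omega
      · -- extend the walk
        have hne : p ++ [v] ≠ [] := by simp
        have hnd' : (p ++ [v]).Nodup := hnd.append (List.nodup_singleton v) (by simpa using hvp)
        have hch' : (p ++ [v]).Chain' (fun u v => 1 ≤ f u v) := by
          apply List.isChain_append.2
          refine ⟨hch, List.isChain_singleton v, ?_⟩
          intro a ha b hb
          simp only [List.head?_cons, Option.mem_def, Option.some.injEq] at hb
          rw [hlast?] at ha
          simp only [Option.mem_def, Option.some.injEq] at ha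
          subst ha; subst hb
          exact hv
        have hhd' : (p ++ [v]).head? = some y := by
          rw [List.head?_append_of_ne_nil _ hp]; exact hhd
        have hcard' : Fintype.card V < (p ++ [v]).length + n := by
          simp only [List.length_append, List.length_singleton]
          omega
        have hout' : 1 ≤ ∑ u, f ((p ++ [v]).getLast hne) u := by
          have hlv : (p ++ [v]).getLast hne = v := by
            simp [List.getLast_append]
          rw [hlv]
          refine le_trans ?_ (hstep v hvz)
          calc 1 ≤ f x v := hv
            _ ≤ ∑ u, f u v :=
              Finset.single_le_sum (f := fun u => f u v) (fun i _ => Nat.zero_le _)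
                (Finset.mem_univ x)
        exact ih (p ++ [v]) hne hnd' hch' hhd' hcard' hout'

lemma one_le_chi_head {a b : V} (t : List V) : 1 ≤ chi (a :: b :: t) a b := by
  have : (a, b) ∈ pathArcs (a :: b :: t) := by
    show (a, b) ∈ (a, b) :: pathArcs (b :: t)
    exact List.mem_cons_self
  exact List.count_pos_iff.2 this

lemma sub_flow (N : Network V) (y z : V) (f : V → V → ℕ) (hf : IsFlow N y z f)
    (q : List V) (h2 : 2 ≤ q.length) (hnd : q.dropLast.Nodup)
    (hch : q.Chain' fun u v => 1 ≤ f u v)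
    (hcount : ∀ x, x ≠ y → x ≠ z → q.tail.count x = q.dropLast.count x) :
    IsFlow N y z (fun u v => f u v - chi q u v) ∧
    flowValue (fun u v => f u v - chi q u v) y
      = flowValue f y - ((q.dropLast.count y : ℤ) - (q.tail.count y : ℤ)) ∧
    (∀ u v, f u v = (f u v - chi q u v) + chi q u v) ∧
    (∑ u, ∑ v, (f u v - chi q u v)) < ∑ u, ∑ v, f u v := by
  have hle : ∀ u v, chi q u v ≤ f u v := chi_le_f hnd hch
  refine ⟨⟨?_, ?_⟩, ?_, ?_, ?_⟩
  · intro u v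
    exact le_trans (Nat.sub_le _ _) (hf.1 u v)
  · intro x hxy hxz
    rw [Finset.sum_tsub_distrib _ (fun u _ => hle u x),
        Finset.sum_tsub_distrib _ (fun u _ => hle x u),
        sum_chi_in, sum_chi_out, hf.2 x hxy hxz, hcount x hxy hxz]
  · have hcast : ∀ u v, ((f u v - chi q u v : ℕ) : ℤ) = (f u v : ℤ) - (chi q u v : ℤ) :=
      fun u v => by rw [Nat.cast_sub (hle u v)]
    simp only [flowValue, hcast, Finset.sum_sub_distrib]
    have h1 : ∑ u, (chi q y u : ℤ) = (q.dropLast.count y : ℤ) := by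
      rw [← Nat.cast_sum, sum_chi_out]
    have h2 : ∑ u, (chi q u y : ℤ) = (q.tail.count y : ℤ) := by
      rw [← Nat.cast_sum, sum_chi_in]
    rw [h1, h2]
    ring
  · intro u v
    exact (Nat.sub_add_cancel (hle u v)).symm
  · obtain ⟨a, b, t, rfl⟩ : ∃ a b t, q = a :: b :: t := by
      match q, h2 with
      | a :: b :: t, _ => exact ⟨a, b, t, rfl⟩
    apply Finset.sum_lt_sum (fun u _ => Finset.sum_le_sum fun v _ => Nat.sub_le _ _)
    refine ⟨a, Finset.mem_univ a, ?_⟩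
    apply Finset.sum_lt_sum (fun v _ => Nat.sub_le _ _)
    refine ⟨b, Finset.mem_univ b, ?_⟩
    have h1 := one_le_chi_head (a := a) (b := b) t
    have h2 := hle a b
    omega

lemma no_short_loop {p : List V} (hnd : p.Nodup) (hh : p.head? = p.getLast?)
    (hl : 2 ≤ p.length) : False := by
  match p, hl, hnd, hh with
  | a :: b :: t, _, hnd, hh =>
    have h2 : (a :: b :: t).getLast? = (b :: t).getLast? := List.getLast?_cons_cons ..
    rw [List.head?_cons, h2] at hh
    have ha : a ∈ b :: t := List.mem_of_getLast? hh.symm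
    exact (List.nodup_cons.1 hnd).1 ha

lemma countP_le_chi_sum (l : List (List V)) (u v : V) :
    l.countP (fun p => decide ((u, v) ∈ pathArcs p)) ≤ (l.map fun p => chi p u v).sum := by
  induction l with
  | nil => simp
  | cons p t ih =>
    rw [List.countP_cons, List.map_cons, List.sum_cons]
    by_cases h : (u, v) ∈ pathArcs p
    · have h1 : 1 ≤ chi p u v := List.count_pos_iff.2 h
      rw [if_pos (by simp [h])]
      omega
    · rw [if_neg (by simp [h])]
      omega

lemma decomp_exists (N : Network V) (y z : V) (hyz : y ≠ z) :
    ∀ (S : ℕ) (f : V → V → ℕ), (∑ u, ∑ v, f u v) ≤ S → IsFlow N y z f →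
      ∀ m : ℕ, flowValue f y = (m : ℤ) →
      ∃ γ w : List (List V), γ.length = m ∧ IsDecomposition N y z f γ w := by
  intro S
  induction S with
  | zero =>
    intro f hS hf m hm
    have h0 : ∀ u v, f u v = 0 := by
      intro u v
      by_contra h
      have h1 : 1 ≤ f u v := Nat.one_le_iff_ne_zero.2 h
      have h2 : 1 ≤ ∑ u', ∑ v', f u' v' := by
        calc 1 ≤ f u v := h1
          _ ≤ ∑ v', f u v' :=
            Finset.single_le_sum (f := fun v' => f u v') (fun i _ => Nat.zero_le _)
              (Finset.mem_univ v)
          _ ≤ ∑ u', ∑ v', f u' v' :=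
            Finset.single_le_sum (f := fun u' => ∑ v', f u' v') (fun i _ => Nat.zero_le _)
              (Finset.mem_univ u)
      omega
    have hv0 : flowValue f y = 0 := by simp [flowValue, h0]
    have hm0 : m = 0 := by
      rw [hv0] at hm
      exact_mod_cast hm.symm
    exact ⟨[], [], by simp [hm0], by simp, by simp, by simp [hv0], fun u v => by simp [h0]⟩
  | succ S ih =>
    intro f hS hf m hm
    by_cases h0 : ∀ u v, f u v = 0
    · have hv0 : flowValue f y = 0 := by simp [flowValue, h0]
      have hm0 : m = 0 := by
        rw [hv0] at hm
        exact_mod_cast hm.symm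
      exact ⟨[], [], by simp [hm0], by simp, by simp, by simp [hv0], fun u v => by simp [h0]⟩
    push_neg at h0
    obtain ⟨u0, v0, hu0⟩ := h0
    have hu0' : 1 ≤ f u0 v0 := Nat.one_le_iff_ne_zero.2 hu0
    have hloop : ∀ v, f v v = 0 := fun v =>
      Nat.le_antisymm (le_trans (hf.1 v v) (le_of_eq (N.no_loop v))) (Nat.zero_le _)
    cases m with
    | zero =>
      -- conservation holds everywhere; find a cycle
      have hy : ∑ u, f u y = ∑ u, f y u := by
        have := hm
        simp only [flowValue, Nat.cast_zero, sub_eq_zero] at this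
        have := this.symm
        exact_mod_cast (by push_cast at this ⊢; linarith : (∑ u, (f u y : ℤ)) = ∑ u, (f y u : ℤ))
      have hall : ∀ x, x ≠ z → ∑ u, f u x = ∑ u, f x u := by
        intro x hx
        by_cases hxy : x = y
        · subst hxy; exact hy
        · exact hf.2 x hxy hx
      have hz : ∑ u, f u z = ∑ u, f z u := by
        have hglob : ∑ x, ∑ u, f u x = ∑ x, ∑ u, f x u := Finset.sum_comm
        have he : ∑ x ∈ Finset.univ.erase z, ∑ u, f u x
            = ∑ x ∈ Finset.univ.erase z, ∑ u, f x u :=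
          Finset.sum_congr rfl fun x hx => hall x (Finset.ne_of_mem_erase hx)
        have e1 : ∑ x, ∑ u, f u x
            = (∑ u, f u z) + ∑ x ∈ Finset.univ.erase z, ∑ u, f u x :=
          (Finset.add_sum_erase _ _ (Finset.mem_univ z)).symm
        have e2 : ∑ x, ∑ u, f x u
            = (∑ u, f z u) + ∑ x ∈ Finset.univ.erase z, ∑ u, f x u :=
          (Finset.add_sum_erase _ _ (Finset.mem_univ z)).symm
        omega
      have hallz : ∀ x, ∑ u, f u x = ∑ u, f x u := by
        intro x
        by_cases hx : x = z
        · subst hx; exact hz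
        · exact hall x hx
      have hout0 : 1 ≤ ∑ u, f ([u0].getLast (by simp)) u := by
        simp only [List.getLast_singleton]
        calc 1 ≤ f u0 v0 := hu0'
          _ ≤ ∑ u, f u0 u :=
            Finset.single_le_sum (f := fun u => f u0 u) (fun i _ => Nat.zero_le _)
              (Finset.mem_univ v0)
      have hwalk := walk_rec f hloop u0 u0 (fun x _ => le_of_eq (hallz x))
        (Fintype.card V) [u0] (by simp) (by simp) (List.isChain_singleton _) (by simp) (by simp) hout0
      rcases hwalk with ⟨q, hq3, hqnd, hqhl, hqch⟩ | ⟨p', hpnd, _, hph, hpl, hp2⟩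
      · -- subtract the cycle
        have hq0 : q ≠ [] := by
          intro h; rw [h] at hq3; simp at hq3
        have hqcount : ∀ x, q.tail.count x = q.dropLast.count x := cycle_count hq0 hqhl
        obtain ⟨hgflow, hgval, hgrec, hglt⟩ :=
          sub_flow N y z f hf q (by omega) hqnd hqch (fun x _ _ => hqcount x)
        have hgval' : flowValue (fun u v => f u v - chi q u v) y = ((0 : ℕ) : ℤ) := by
          rw [hgval, hqcount y, hm]
          push_cast
          ring
        obtain ⟨γ, w, hγlen, hγp, hγc, hγv, hγs⟩ :=
          ih _ (Nat.lt_succ_iff.mp (lt_of_lt_of_le hglt hS)) hgflow 0 hgval'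
        refine ⟨γ, q :: w, hγlen, hγp, ?_, ?_, ?_⟩
        · intro q' hq'
          rcases List.mem_cons.1 hq' with rfl | hq'
          · exact ⟨hq3, hqnd, hqhl, hqch.imp fun {a b} h => le_trans h (hf.1 a b)⟩
          · exact hγc q' hq'
        · rw [hγlen, hm]
        · intro u v
          have h3 : f u v - chi q u v
              = (List.map (fun p => chi p u v) γ).sum
                + (List.map (fun q' => chi q' u v) w).sum := hγs u v
          have hrec := hgrec u v
          simp only [List.map_cons, List.sum_cons]
          omega
      · exact (no_short_loop hpnd (by rw [hph, hpl]) hp2).elim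
    | succ k =>
      -- positive value: walk from y to z
      have hmz : (∑ u, (f y u : ℤ)) - (∑ u, (f u y : ℤ)) = ((k : ℤ) + 1) := by
        have h := hm
        simp only [flowValue] at h
        push_cast at h
        linarith
      have hstep : ∀ x, x ≠ z → ∑ u, f u x ≤ ∑ u, f x u := by
        intro x hx
        by_cases hxy : x = y
        · subst hxy
          have h1 : (∑ u, (f u x : ℤ)) ≤ ∑ u, (f x u : ℤ) := by linarith
          exact_mod_cast h1
        · exact le_of_eq (hf.2 x hxy hx)
      have houty : 1 ≤ ∑ u, f y u := by
        have hnn : (0 : ℤ) ≤ ∑ u, (f u y : ℤ) :=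
          Finset.sum_nonneg fun i _ => by positivity
        have h1 : (1 : ℤ) ≤ ∑ u, (f y u : ℤ) := by linarith
        exact_mod_cast h1
      have hwalk := walk_rec f hloop y z hstep (Fintype.card V) [y] (by simp) (by simp)
        (List.isChain_singleton _) (by simp) (by simp only [List.length_singleton]; omega)
        (by simpa using houty)
      rcases hwalk with ⟨q, hq3, hqnd, hqhl, hqch⟩ | ⟨p', hpnd, hpch, hph, hpl, hp2⟩
      · -- subtract the cycle; value unchanged
        have hq0 : q ≠ [] := by
          intro h; rw [h] at hq3; simp at hq3
        have hqcount : ∀ x, q.tail.count x = q.dropLast.count x := cycle_count hq0 hqhl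
        obtain ⟨hgflow, hgval, hgrec, hglt⟩ :=
          sub_flow N y z f hf q (by omega) hqnd hqch (fun x _ _ => hqcount x)
        have hgval' : flowValue (fun u v => f u v - chi q u v) y = ((k + 1 : ℕ) : ℤ) := by
          rw [hgval, hqcount y, hm]
          push_cast
          ring
        obtain ⟨γ, w, hγlen, hγp, hγc, hγv, hγs⟩ :=
          ih _ (Nat.lt_succ_iff.mp (lt_of_lt_of_le hglt hS)) hgflow (k + 1) hgval'
        refine ⟨γ, q :: w, hγlen, hγp, ?_, ?_, ?_⟩
        · intro q' hq'
          rcases List.mem_cons.1 hq' with rfl | hq'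
          · exact ⟨hq3, hqnd, hqhl, hqch.imp fun {a b} h => le_trans h (hf.1 a b)⟩
          · exact hγc q' hq'
        · rw [hγlen, hm]
        · intro u v
          have h3 : f u v - chi q u v
              = (List.map (fun p => chi p u v) γ).sum
                + (List.map (fun q' => chi q' u v) w).sum := hγs u v
          have hrec := hgrec u v
          simp only [List.map_cons, List.sum_cons]
          omega
      · -- subtract the path; value decreases by one
        have hp0 : p' ≠ [] := by
          intro h; rw [h] at hp2; simp at hp2
        have hhead : p'.head hp0 = y := by
          have := List.head?_eq_head hp0
          rw [hph] at this
          exact (Option.some.inj this).symm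
        have hlastv : p'.getLast hp0 = z := by
          have := List.getLast?_eq_getLast hp0
          rw [hpl] at this
          exact (Option.some.inj this).symm
        have hcount : ∀ x, x ≠ y → x ≠ z → p'.tail.count x = p'.dropLast.count x := by
          intro x hxy hxz
          have h1 := count_tail hp0 x
          have h2 := count_dropLast hp0 x
          rw [hhead, if_neg (fun h => hxy h.symm)] at h1
          rw [hlastv, if_neg (fun h => hxz h.symm)] at h2
          omega
        have hyp : y ∈ p' := by
          have := List.head_mem hp0
          rwa [hhead] at this
        have hc1 : p'.count y = 1 := List.count_eq_one_of_mem hpnd hyp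
        have hcy_tail : p'.tail.count y = 0 := by
          have h1 := count_tail hp0 y
          rw [hhead, if_pos rfl] at h1
          omega
        have hcy_drop : p'.dropLast.count y = 1 := by
          have h2 := count_dropLast hp0 y
          rw [hlastv, if_neg (fun h => hyz h.symm)] at h2
          omega
        obtain ⟨hgflow, hgval, hgrec, hglt⟩ :=
          sub_flow N y z f hf p' hp2 (hpnd.sublist (List.dropLast_sublist p')) hpch hcount
        have hgval' : flowValue (fun u v => f u v - chi p' u v) y = ((k : ℕ) : ℤ) := by
          rw [hgval, hcy_tail, hcy_drop, hm]
          push_cast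
          ring
        obtain ⟨γ, w, hγlen, hγp, hγc, hγv, hγs⟩ :=
          ih _ (Nat.lt_succ_iff.mp (lt_of_lt_of_le hglt hS)) hgflow k hgval'
        refine ⟨p' :: γ, w, by simp [hγlen], ?_, hγc, ?_, ?_⟩
        · intro p hp
          rcases List.mem_cons.1 hp with rfl | hp
          · exact ⟨hp2, hpnd, hph, hpl, hpch.imp fun {a b} h => le_trans h (hf.1 a b)⟩
          · exact hγp p hp
        · rw [List.length_cons, hγlen, hm]
        · intro u v
          have h3 : f u v - chi p' u v
              = (List.map (fun p => chi p u v) γ).sum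
                + (List.map (fun q' => chi q' u v) w).sum := hγs u v
          have hrec := hgrec u v
          simp only [List.map_cons, List.sum_cons]
          omega

end NetFlow
end FlowDecompAux

/-- Flow Decomposition: every flow `f` from `y` to `z` of value `m` admits a
decomposition into `m` paths from `y` to `z` and finitely many cycles; moreover, for every
decomposition `(γ, w)` of `f`, the sequence `γ` is a sequence of `m` arc-disjoint paths. -/
theorem flow_decomposition {V : Type*} [Fintype V] [DecidableEq V]
    (hV : 2 ≤ Fintype.card V) (N : Network V) (y z : V) (hyz : y ≠ z)
    (f : V → V → ℕ) (hf : NetFlow.IsFlow N y z f) (m : ℕ)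
    (hm : NetFlow.flowValue f y = (m : ℤ)) :
    (∃ γ w : List (List V), γ.length = m ∧ NetFlow.IsDecomposition N y z f γ w) ∧
      ∀ γ w : List (List V), NetFlow.IsDecomposition N y z f γ w →
        NetFlow.IsPathSeq N y z γ ∧ γ.length = m := by
  constructor
  · obtain ⟨γ, w, hlen, hdec⟩ :=
      NetFlow.decomp_exists N y z hyz (∑ u, ∑ v, f u v) f le_rfl hf m hm
    exact ⟨γ, w, hlen, hdec⟩
  · intro γ w hdec
    obtain ⟨hp, hc, hval, hsum⟩ := hdec
    constructor
    · refine ⟨hp, ?_⟩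
      intro u v
      calc γ.countP (fun p => decide ((u, v) ∈ NetFlow.pathArcs p))
          ≤ (γ.map fun p => NetFlow.chi p u v).sum := NetFlow.countP_le_chi_sum γ u v
        _ ≤ f u v := by rw [hsum u v]; omega
        _ ≤ N.c u v := hf.1 u v
    · have h2 : (γ.length : ℤ) = (m : ℤ) := by rw [hval, hm]
      exact_mod_cast h2
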